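/- Let k ≥ 2, let F be a k-regular graph on 3k−1 vertices, and let H be an n-vertex blow-up of F such that every vertex class Z of H satisfies |N(Z)| ≤ s and |Z| ≥ (k−1)n − (3k−4)s. Then e(H) ≤ g_k(n,s), where g_k(n,s) = k(k−1)n²/2 − k(3k−4)ns + (3k−4)(3k−1)s²/2. -/

import Mathlib

open Finset

/-- The blow-up of a graph `F` with class sizes given by `w`. -/
def SimpleGraph.blowup {α : Type*} (F : SimpleGraph α) (w : α → ℕ) :
    SimpleGraph (Σ a, Fin (w a)) where
  Adj x y := F.Adj x.1 y.1
  symm := ⟨fun _ _ h => F.symm.symm _ _ h⟩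
  loopless := ⟨fun x h => F.loopless.irrefl x.1 h⟩

/-- The function `g_k(n,s) = k(k-1)n²/2 - k(3k-4)ns + (3k-4)(3k-1)s²/2`. -/
noncomputable def g (k n s : ℕ) : ℚ :=
  (k : ℚ) * ((k : ℚ) - 1) * (n : ℚ) ^ 2 / 2
    - (k : ℚ) * (3 * (k : ℚ) - 4) * (n : ℚ) * (s : ℚ)
    + (3 * (k : ℚ) - 4) * (3 * (k : ℚ) - 1) * (s : ℚ) ^ 2 / 2

open scoped Classical in
theorem blowup_two_mul_card_edges {α : Type*} [Fintype α] (F : SimpleGraph α) (w : α → ℕ) :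
    2 * (F.blowup w).edgeFinset.card = ∑ a, w a * (∑ b ∈ F.neighborFinset a, w b) := by
  rw [← SimpleGraph.sum_degrees_eq_twice_card_edges]
  have hG : ∀ x y : Σ a, Fin (w a), (F.blowup w).Adj x y ↔ F.Adj x.1 y.1 := fun _ _ => Iff.rfl
  have hdeg : ∀ x : Σ a, Fin (w a),
      (F.blowup w).degree x = ∑ b ∈ F.neighborFinset x.1, w b := by
    intro x
    rw [SimpleGraph.degree, SimpleGraph.neighborFinset_eq_filter, Finset.card_filter]
    rw [← Finset.univ_sigma_univ, Finset.sum_sigma]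
    simp only [hG]
    rw [Finset.sum_congr rfl (fun a _ => Finset.sum_const _)]
    simp [SimpleGraph.neighborFinset_eq_filter, Finset.sum_filter, Finset.sum_ite_eq]
  rw [← Finset.univ_sigma_univ, Finset.sum_sigma]
  refine Finset.sum_congr rfl (fun a _ => ?_)
  trans ∑ _x : Fin (w a), ∑ b ∈ F.neighborFinset a, w b
  · exact Finset.sum_congr rfl (fun x _ => hdeg ⟨a, x⟩)
  simp [mul_comm]

open scoped Classical in
/-- If `k ≥ 2`, `F` is a `k`-regular graph on `3k-1` vertices, and `H` is an
`n`-vertex blow-up of `F` all of whose vertex classes `Z` satisfy `|N(Z)| ≤ s`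
and `|Z| ≥ (k-1)n - (3k-4)s`, then `e(H) ≤ g_k(n,s)`. -/
theorem stmt_5 {α : Type*} [Fintype α] (F : SimpleGraph α) (k : ℕ) (hk : 2 ≤ k)
    (hreg : F.IsRegularOfDegree k) (hr : Fintype.card α = 3 * k - 1)
    (w : α → ℕ) (n s : ℕ) (hn : n = ∑ a, w a)
    (hs : ∀ a, ∑ b ∈ F.neighborFinset a, w b ≤ s)
    (hlow : ∀ a, ((k : ℤ) - 1) * n - (3 * (k : ℤ) - 4) * s ≤ (w a : ℤ)) :
    ((F.blowup w).edgeFinset.card : ℚ) ≤ g k n s := by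
  -- d a := weight of the neighbourhood of a
  set d : α → ℕ := fun a => ∑ b ∈ F.neighborFinset a, w b with hd
  -- double counting: ∑ a, d a = k * n
  have hsum_d : ∑ a, d a = k * n := by
    have h1 : ∀ a, d a = ∑ b, if F.Adj a b then w b else 0 := by
      intro a
      simp [hd, SimpleGraph.neighborFinset_eq_filter, Finset.sum_filter]
    calc ∑ a, d a = ∑ a, ∑ b, if F.Adj a b then w b else 0 := by
          exact Finset.sum_congr rfl fun a _ => h1 a
      _ = ∑ b, ∑ a, if F.Adj a b then w b else 0 := Finset.sum_comm
      _ = ∑ b, k * w b := by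
          refine Finset.sum_congr rfl fun b _ => ?_
          have : ∑ a, (if F.Adj a b then w b else 0) =
              ∑ a ∈ Finset.univ.filter (fun a => F.Adj a b), w b := by
            rw [Finset.sum_filter]
          rw [this, Finset.sum_const, smul_eq_mul]
          congr 1
          have : Finset.univ.filter (fun a => F.Adj a b) = F.neighborFinset b := by
            ext a
            simp [SimpleGraph.adj_comm]
          rw [this]
          exact hreg b
      _ = k * n := by rw [← Finset.mul_sum, hn]
  -- the integer bound L
  set L : ℤ := ((k : ℤ) - 1) * n - (3 * (k : ℤ) - 4) * s with hL
  -- main integer inequality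
  have hkey : (∑ a, (w a : ℤ) * (d a : ℤ)) ≤ L * (k * n) + ((n : ℤ) - (3 * k - 1) * L) * s := by
    have hstep : ∀ a ∈ Finset.univ, (w a : ℤ) * (d a : ℤ) ≤ L * d a + ((w a : ℤ) - L) * s := by
      intro a _
      have h1 : L ≤ (w a : ℤ) := hlow a
      have h2 : (d a : ℤ) ≤ (s : ℤ) := by exact_mod_cast hs a
      nlinarith [mul_nonneg (sub_nonneg.2 h1) (sub_nonneg.2 h2)]
    calc (∑ a, (w a : ℤ) * (d a : ℤ)) ≤ ∑ a, (L * d a + ((w a : ℤ) - L) * s) :=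
          Finset.sum_le_sum hstep
      _ = L * (∑ a, (d a : ℤ)) + ((∑ a, (w a : ℤ)) - (Fintype.card α : ℤ) * L) * s := by
          rw [Finset.sum_add_distrib, ← Finset.mul_sum, ← Finset.sum_mul, Finset.sum_sub_distrib,
            Finset.sum_const, Finset.card_univ, nsmul_eq_mul]
      _ = L * (k * n) + ((n : ℤ) - (3 * k - 1) * L) * s := by
          have e1 : (∑ a, (d a : ℤ)) = (k : ℤ) * n := by exact_mod_cast hsum_d
          have e2 : (∑ a, (w a : ℤ)) = (n : ℤ) := by exact_mod_cast hn.symm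
          have e3 : (Fintype.card α : ℤ) = 3 * (k : ℤ) - 1 := by
            rw [hr]; push_cast [Nat.cast_sub (by omega : 1 ≤ 3 * k)]; ring
          rw [e1, e2, e3]
  -- relate edge count
  have h2e : 2 * (F.blowup w).edgeFinset.card = ∑ a, w a * d a :=
    blowup_two_mul_card_edges F w
  -- pass to ℚ
  have hcard : (2 : ℚ) * ((F.blowup w).edgeFinset.card : ℚ) = ∑ a, (w a : ℚ) * (d a : ℚ) := by
    exact_mod_cast congrArg (Nat.cast : ℕ → ℚ) h2e
  have hQ : (∑ a, (w a : ℚ) * (d a : ℚ)) ≤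
      (L : ℚ) * ((k : ℚ) * n) + ((n : ℚ) - (3 * (k : ℚ) - 1) * (L : ℚ)) * s := by
    exact_mod_cast hkey
  have hLQ : (L : ℚ) = ((k : ℚ) - 1) * n - (3 * (k : ℚ) - 4) * s := by
    rw [hL]; push_cast; ring
  rw [hLQ] at hQ
  rw [g]
  linarith [hQ, hcard]
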